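/- Let p ≥ 2, q ≥ 2, and 0 ≤ r ≤ p, and in the Hsu-grid HG_{p,q} let A = {v_{i,j} : 1 ≤ i ≤ r, 1 ≤ j ≤ q} be the set of vertices in the first r rows. Then the cut-rank of this row-prefix cut satisfies ρ(A) ≤ 2q. (This underlies the bound that any horizontal decomposition tree of HG_{p,q} has rank-width at most 2q, hence rw(HG_{p,q}) ≤ 2q.) -/

import Mathlib

open Classical in
/-- The cut matrix of `A`: rows indexed by `A`, columns by its complement, over GF(2),
with `(x,y)` entry `1` iff `x` and `y` are adjacent. -/
noncomputable def cutMatrix {V : Type*} [Fintype V] [DecidableEq V]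
    (G : SimpleGraph V) (A : Finset V) : Matrix ↥A ↥(Aᶜ) (ZMod 2) :=
  Matrix.of fun x y => if G.Adj x.1 y.1 then 1 else 0

/-- The cut-rank `ρ_G(A)`: the GF(2)-rank of the cut matrix of `A`. -/
noncomputable def cutRank {V : Type*} [Fintype V] [DecidableEq V]
    (G : SimpleGraph V) (A : Finset V) : ℕ :=
  (cutMatrix G A).rank

/-- The union-count `U_G(A)`: the number of distinct sets `N(Y) \ A` over `Y ⊆ A`. -/
noncomputable def unionCount {V : Type*} [Fintype V] [DecidableEq V]
    (G : SimpleGraph V) (A : Finset V) : ℕ :=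
  Set.ncard {S : Set V | ∃ Y : Set V, Y ⊆ ↑A ∧ (⋃ y ∈ Y, G.neighborSet y) \ ↑A = S}

/-- `nss_G(A)`: the number of distinct GF(2)-linear spans of subsets of rows of the
cut matrix of `A`. -/
noncomputable def nss {V : Type*} [Fintype V] [DecidableEq V]
    (G : SimpleGraph V) (A : Finset V) : ℕ :=
  Set.ncard {W : Submodule (ZMod 2) (↥(Aᶜ) → ZMod 2) |
    ∃ S : Set ↥A, W = Submodule.span (ZMod 2) ((fun x => cutMatrix G A x) '' S)}

/-- The Hsu-grid `HG_{p,q}` (0-indexed): vertex set `Fin p × Fin q` (`v_{i,j}` has row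
`i` and column `j`), with edges `v_{i,j} ~ v_{i+1,j}` (consecutive rows, same column)
and `v_{i,j} ~ v_{i',j+1}` for `i ≤ i'` (Hsu edges between consecutive columns). -/
def hsuGrid (p q : ℕ) : SimpleGraph (Fin p × Fin q) where
  Adj x y :=
    (x.2 = y.2 ∧ ((x.1 : ℕ) + 1 = (y.1 : ℕ) ∨ (y.1 : ℕ) + 1 = (x.1 : ℕ))) ∨
    ((x.2 : ℕ) + 1 = (y.2 : ℕ) ∧ (x.1 : ℕ) ≤ (y.1 : ℕ)) ∨
    ((y.2 : ℕ) + 1 = (x.2 : ℕ) ∧ (y.1 : ℕ) ≤ (x.1 : ℕ))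
  symm := by
    constructor
    rintro x y (⟨h1, h2⟩ | ⟨h1, h2⟩ | ⟨h1, h2⟩)
    · exact Or.inl ⟨h1.symm, h2.symm⟩
    · exact Or.inr (Or.inr ⟨h1, h2⟩)
    · exact Or.inr (Or.inl ⟨h1, h2⟩)
  loopless := by
    constructor
    rintro x (⟨-, h⟩ | ⟨h, -⟩ | ⟨h, -⟩) <;> omega

/-- in the Hsu-grid `HG_{p,q}`, the cut given by the first `r` rows
(vertices `v_{i,j}` with `i < r`, 0-indexed) has cut-rank at most `2q`. -/
theorem hsuGrid_row_prefix_cutRank (p q r : ℕ) (hp : 2 ≤ p) (hq : 2 ≤ q)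
    (hr : r ≤ p) :
    cutRank (hsuGrid p q)
        (Finset.univ.filter (fun x : Fin p × Fin q => (x.1 : ℕ) < r)) ≤ 2 * q := by
  classical
  set A : Finset (Fin p × Fin q) :=
    Finset.univ.filter (fun x : Fin p × Fin q => (x.1 : ℕ) < r) with hA
  set M := cutMatrix (hsuGrid p q) A with hM
  -- the two possible row types per column
  set f : Fin q × Bool → (↥(Aᶜ) → ZMod 2) := fun jb y =>
    if ((y.1.2 : ℕ) = (jb.1 : ℕ) + 1) ∨
        (jb.2 = true ∧ (y.1.2 : ℕ) = (jb.1 : ℕ) ∧ (y.1.1 : ℕ) = r) then 1 else 0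
    with hf
  have hrow : ∀ x : ↥A, M x = f (x.1.2, decide ((x.1.1 : ℕ) + 1 = r)) := by
    intro x
    funext y
    have hxA : (x.1.1 : ℕ) < r := (Finset.mem_filter.mp x.2).2
    have hyA : r ≤ (y.1.1 : ℕ) := by
      have := Finset.mem_compl.mp y.2
      rw [Finset.mem_filter] at this
      push_neg at this
      exact this (Finset.mem_univ _)
    simp only [hM, hf, cutMatrix, Matrix.of_apply]
    by_cases hadj : ((x.1.2 = y.1.2 ∧ ((x.1.1 : ℕ) + 1 = (y.1.1 : ℕ) ∨ (y.1.1 : ℕ) + 1 = (x.1.1 : ℕ))) ∨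
        ((x.1.2 : ℕ) + 1 = (y.1.2 : ℕ) ∧ (x.1.1 : ℕ) ≤ (y.1.1 : ℕ)) ∨
        ((y.1.2 : ℕ) + 1 = (x.1.2 : ℕ) ∧ (y.1.1 : ℕ) ≤ (x.1.1 : ℕ)))
    · rw [if_pos (show (hsuGrid p q).Adj x.1 y.1 from hadj), if_pos]
      rcases hadj with ⟨h1, h2⟩ | ⟨h1, h2⟩ | ⟨h1, h2⟩
      · right
        have hc : (x.1.2 : ℕ) = (y.1.2 : ℕ) := by rw [h1]
        refine ⟨by simp; omega, hc.symm, by omega⟩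
      · left; omega
      · omega
    · rw [if_neg (show ¬(hsuGrid p q).Adj x.1 y.1 from hadj), if_neg]
      intro hcon
      apply hadj
      rcases hcon with h1 | ⟨h2, h3, h4⟩
      · exact Or.inr (Or.inl ⟨h1.symm, by omega⟩)
      · simp at h2
        refine Or.inl ⟨?_, by omega⟩
        apply Fin.ext; omega
  have hsub : Set.range (fun x : ↥A => M x) ⊆ Set.range f := by
    rintro v ⟨x, rfl⟩
    exact ⟨_, (hrow x).symm⟩
  have hrank : M.rank = Module.finrank (ZMod 2)
      (Submodule.span (ZMod 2) (Set.range (fun x : ↥A => M x))) := by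
    exact M.rank_eq_finrank_span_row
  calc cutRank (hsuGrid p q) A = M.rank := rfl
    _ = _ := hrank
    _ ≤ Module.finrank (ZMod 2) (Submodule.span (ZMod 2) (Set.range f)) :=
        Submodule.finrank_mono (Submodule.span_mono hsub)
    _ ≤ Fintype.card (Fin q × Bool) := finrank_range_le_card f
    _ = 2 * q := by simp [Fintype.card_prod]; ring
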